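/- (Hoeffding's covariance identity.) Let X and Y be real random variables on a common probability space with E[X²] < ∞ and E[Y²] < ∞. Then the function (u,v) ↦ P(X > u, Y > v) − P(X > u) P(Y > v) is Lebesgue integrable on ℝ² and Cov(X, Y) = ∫_ℝ ∫_ℝ ( P(X > u, Y > v) − P(X > u) P(Y > v) ) du dv. -/

import Mathlib

open MeasureTheory ProbabilityTheory Set

noncomputable section

def hcovG (a u : ℝ) : ℝ := if u < a then 1 else 0

lemma hcovG_meas {α : Type*} [MeasurableSpace α] {f h : α → ℝ}
    (hf : Measurable f) (hh : Measurable h) :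
    Measurable (fun x => hcovG (f x) (h x)) :=
  Measurable.ite (measurableSet_lt hh hf) measurable_const measurable_const

lemma hcovD_eq {a b : ℝ} (h : b ≤ a) :
    (fun u => hcovG a u - hcovG b u) = (Ico b a).indicator (fun _ => (1:ℝ)) := by
  funext u
  simp only [hcovG, indicator, mem_Ico]
  by_cases h1 : u < b
  · have h2 : u < a := lt_of_lt_of_le h1 h
    rw [if_pos h1, if_pos h2]
    simp [not_le.2 h1]
  · by_cases h2 : u < a
    · rw [if_pos h2, if_neg h1]
      simp [not_lt.1 h1, h2]
    · rw [if_neg h1, if_neg h2]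
      simp [h2]

lemma hcovD_abs_eq {a b : ℝ} (h : b ≤ a) :
    (fun u => |hcovG a u - hcovG b u|) = (Ico b a).indicator (fun _ => (1:ℝ)) := by
  funext u
  rw [congrFun (hcovD_eq h) u]
  by_cases hu : u ∈ Ico b a <;> simp [hu]

lemma hcovD_indicator_integrable (b a : ℝ) :
    Integrable ((Ico b a).indicator (fun _ => (1:ℝ))) volume :=
  (integrable_indicator_iff measurableSet_Ico).2
    (integrableOn_const measure_Ico_lt_top.ne)

lemma hcovD_integrable (a b : ℝ) :
    Integrable (fun u => hcovG a u - hcovG b u) volume := by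
  rcases le_total b a with h | h
  · rw [hcovD_eq h]; exact hcovD_indicator_integrable b a
  · have h2 : Integrable (fun u => hcovG b u - hcovG a u) volume := by
      rw [hcovD_eq h]; exact hcovD_indicator_integrable a b
    have := h2.neg
    refine this.congr (Filter.Eventually.of_forall fun u => by simp)

lemma hcovD_indicator_integral (b a : ℝ) (h : b ≤ a) :
    ∫ u, (Ico b a).indicator (fun _ => (1:ℝ)) u = a - b := by
  rw [integral_indicator_const (1:ℝ) measurableSet_Ico]
  simp [Real.volume_Ico, ENNReal.toReal_ofReal (by linarith : (0:ℝ) ≤ a - b), h]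

lemma hcovD_integral (a b : ℝ) :
    ∫ u, (hcovG a u - hcovG b u) = a - b := by
  rcases le_total b a with h | h
  · rw [hcovD_eq h]; exact hcovD_indicator_integral b a h
  · have h2 : ∫ u, (hcovG b u - hcovG a u) = b - a := by
      rw [hcovD_eq h]; exact hcovD_indicator_integral a b h
    have : ∫ u, (hcovG a u - hcovG b u) = ∫ u, -(hcovG b u - hcovG a u) := by
      congr 1; funext u; ring
    rw [this, integral_neg, h2]; ring

lemma hcovD_integral_abs (a b : ℝ) :
    ∫ u, |hcovG a u - hcovG b u| = |a - b| := by
  rcases le_total b a with h | h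
  · rw [hcovD_abs_eq h, hcovD_indicator_integral b a h, abs_of_nonneg (by linarith)]
  · have : (fun u => |hcovG a u - hcovG b u|) = (Ico a b).indicator (fun _ => (1:ℝ)) := by
      funext u
      rw [abs_sub_comm, congrFun (hcovD_eq h) u]
      by_cases hu : u ∈ Ico a b <;> simp [hu]
    rw [this, hcovD_indicator_integral a b h, abs_of_nonpos (by linarith)]; ring

lemma hcov_prod_integrable (a b c d : ℝ) :
    Integrable (fun p : ℝ × ℝ =>
      (hcovG a p.1 - hcovG b p.1) * (hcovG c p.2 - hcovG d p.2))
      (volume.prod volume) :=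
  (hcovD_integrable a b).mul_prod (hcovD_integrable c d)

lemma hcov_prod_integral (a b c d : ℝ) :
    ∫ p : ℝ × ℝ, (hcovG a p.1 - hcovG b p.1) * (hcovG c p.2 - hcovG d p.2)
      ∂(volume.prod volume) = (a - b) * (c - d) := by
  rw [integral_prod_mul (fun u => hcovG a u - hcovG b u) (fun v => hcovG c v - hcovG d v),
    hcovD_integral, hcovD_integral]

lemma hcov_prod_integral_norm (a b c d : ℝ) :
    ∫ p : ℝ × ℝ, ‖(hcovG a p.1 - hcovG b p.1) * (hcovG c p.2 - hcovG d p.2)‖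
      ∂(volume.prod volume) = |a - b| * |c - d| := by
  simp_rw [norm_mul, Real.norm_eq_abs]
  rw [integral_prod_mul (fun u => |hcovG a u - hcovG b u|) (fun v => |hcovG c v - hcovG d v|),
    hcovD_integral_abs, hcovD_integral_abs]

lemma hcov_int_fst {Ω : Type*} [MeasurableSpace Ω] (P : Measure Ω) [IsProbabilityMeasure P]
    {f : Ω → ℝ} (hf : Integrable f P) :
    Integrable (fun q : Ω × Ω => f q.1) (P.prod P) :=
  (hf.mul_prod (integrable_const (1:ℝ))).congr
    (Filter.Eventually.of_forall fun q => by simp)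

lemma hcov_int_snd {Ω : Type*} [MeasurableSpace Ω] (P : Measure Ω) [IsProbabilityMeasure P]
    {f : Ω → ℝ} (hf : Integrable f P) :
    Integrable (fun q : Ω × Ω => f q.2) (P.prod P) :=
  ((integrable_const (1:ℝ)).mul_prod hf).congr
    (Filter.Eventually.of_forall fun q => by simp)

lemma hcov_integral_fst {Ω : Type*} [MeasurableSpace Ω] (P : Measure Ω) [IsProbabilityMeasure P]
    (f : Ω → ℝ) : ∫ q : Ω × Ω, f q.1 ∂(P.prod P) = ∫ ω, f ω ∂P := by
  have h := integral_prod_mul (μ := P) (ν := P) f (fun _ => (1:ℝ))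
  simpa using h

lemma hcov_integral_snd {Ω : Type*} [MeasurableSpace Ω] (P : Measure Ω) [IsProbabilityMeasure P]
    (f : Ω → ℝ) : ∫ q : Ω × Ω, f q.2 ∂(P.prod P) = ∫ ω, f ω ∂P := by
  have h := integral_prod_mul (μ := P) (ν := P) (fun _ => (1:ℝ)) f
  simpa using h

/-- Hoeffding's covariance identity: for square-integrable `X, Y`,
`(u,v) ↦ P(X>u, Y>v) − P(X>u)P(Y>v)` is Lebesgue integrable on `ℝ²` and
`Cov(X,Y) = ∫∫ (P(X>u, Y>v) − P(X>u)P(Y>v)) du dv`. -/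
theorem hoeffding_covariance_identity {Ω : Type*} [MeasurableSpace Ω]
    (P : Measure Ω) [IsProbabilityMeasure P]
    (X Y : Ω → ℝ) (hX : Measurable X) (hY : Measurable Y)
    (hX2 : Integrable (fun ω => X ω ^ 2) P)
    (hY2 : Integrable (fun ω => Y ω ^ 2) P) :
    Integrable (fun p : ℝ × ℝ =>
      (P {ω | p.1 < X ω ∧ p.2 < Y ω}).toReal
        - (P {ω | p.1 < X ω}).toReal * (P {ω | p.2 < Y ω}).toReal)
      (volume : Measure (ℝ × ℝ)) ∧
    (∫ ω, X ω * Y ω ∂P) - (∫ ω, X ω ∂P) * (∫ ω, Y ω ∂P) =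
      ∫ p : ℝ × ℝ,
        ((P {ω | p.1 < X ω ∧ p.2 < Y ω}).toReal
          - (P {ω | p.1 < X ω}).toReal * (P {ω | p.2 < Y ω}).toReal) := by
  -- basic integrability facts
  have hX1 : Integrable X P :=
    ((memLp_two_iff_integrable_sq hX.aestronglyMeasurable).2 hX2).integrable one_le_two
  have hY1 : Integrable Y P :=
    ((memLp_two_iff_integrable_sq hY.aestronglyMeasurable).2 hY2).integrable one_le_two
  have hXY : Integrable (fun ω => X ω * Y ω) P := by
    refine Integrable.mono' ((hX2.add hY2).div_const 2)
      (hX.mul hY).aestronglyMeasurable (Filter.Eventually.of_forall fun ω => ?_)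
    rw [Real.norm_eq_abs, abs_mul]
    simp only [Pi.add_apply]
    nlinarith [sq_nonneg (|X ω| - |Y ω|), sq_abs (X ω), sq_abs (Y ω),
      abs_nonneg (X ω), abs_nonneg (Y ω)]
  set μ : Measure (Ω × Ω) := P.prod P with hμdef
  set H : ℝ × ℝ → ℝ := fun p =>
    (P {ω | p.1 < X ω ∧ p.2 < Y ω}).toReal
      - (P {ω | p.1 < X ω}).toReal * (P {ω | p.2 < Y ω}).toReal with hHdef
  set G : (ℝ × ℝ) × (Ω × Ω) → ℝ := fun x =>
    (hcovG (X x.2.1) x.1.1 - hcovG (X x.2.2) x.1.1) *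
    (hcovG (Y x.2.1) x.1.2 - hcovG (Y x.2.2) x.1.2) with hGdef
  have hGmeas : Measurable G := by
    apply Measurable.mul
    · exact (hcovG_meas (hX.comp (measurable_fst.comp measurable_snd))
        (measurable_fst.comp measurable_fst)).sub
        (hcovG_meas (hX.comp (measurable_snd.comp measurable_snd))
        (measurable_fst.comp measurable_fst))
    · exact (hcovG_meas (hY.comp (measurable_fst.comp measurable_snd))
        (measurable_snd.comp measurable_fst)).sub
        (hcovG_meas (hY.comp (measurable_snd.comp measurable_snd))
        (measurable_snd.comp measurable_fst))
  -- slice integrability and integrals in the ℝ² variable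
  have hslice1 : ∀ q : Ω × Ω, Integrable (fun p : ℝ × ℝ => G (p, q)) (volume.prod volume) :=
    fun q => hcov_prod_integrable (X q.1) (X q.2) (Y q.1) (Y q.2)
  have hslice1int : ∀ q : Ω × Ω,
      ∫ p : ℝ × ℝ, G (p, q) ∂(volume.prod volume) = (X q.1 - X q.2) * (Y q.1 - Y q.2) :=
    fun q => hcov_prod_integral (X q.1) (X q.2) (Y q.1) (Y q.2)
  have hslice1norm : ∀ q : Ω × Ω,
      ∫ p : ℝ × ℝ, ‖G (p, q)‖ ∂(volume.prod volume) = |X q.1 - X q.2| * |Y q.1 - Y q.2| :=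
    fun q => hcov_prod_integral_norm (X q.1) (X q.2) (Y q.1) (Y q.2)
  -- integrability of |ΔX| |ΔY| on μ
  have hdx2 : Integrable (fun q : Ω × Ω => (X q.1 - X q.2) ^ 2) μ := by
    have h1 := hcov_int_fst P hX2
    have h2 := hcov_int_snd P hX2
    have h3 : Integrable (fun q : Ω × Ω => X q.1 * X q.2) μ := hX1.mul_prod hX1
    exact ((h1.add h2).sub (h3.const_mul 2)).congr
      (Filter.Eventually.of_forall fun q => by simp; ring)
  have hdy2 : Integrable (fun q : Ω × Ω => (Y q.1 - Y q.2) ^ 2) μ := by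
    have h1 := hcov_int_fst P hY2
    have h2 := hcov_int_snd P hY2
    have h3 : Integrable (fun q : Ω × Ω => Y q.1 * Y q.2) μ := hY1.mul_prod hY1
    exact ((h1.add h2).sub (h3.const_mul 2)).congr
      (Filter.Eventually.of_forall fun q => by simp; ring)
  have habs : Integrable (fun q : Ω × Ω => |X q.1 - X q.2| * |Y q.1 - Y q.2|) μ := by
    refine Integrable.mono' ((hdx2.add hdy2).div_const 2)
      ((((hX.comp measurable_fst).sub (hX.comp measurable_snd)).abs.mul
        (((hY.comp measurable_fst).sub (hY.comp measurable_snd)).abs)).aestronglyMeasurable)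
      (Filter.Eventually.of_forall fun q => ?_)
    rw [Real.norm_eq_abs, abs_mul, abs_abs, abs_abs]
    simp only [Pi.add_apply]
    nlinarith [sq_nonneg (|X q.1 - X q.2| - |Y q.1 - Y q.2|),
      sq_abs (X q.1 - X q.2), sq_abs (Y q.1 - Y q.2),
      abs_nonneg (X q.1 - X q.2), abs_nonneg (Y q.1 - Y q.2)]
  -- Integrability of G on the product
  have hGint : Integrable G ((volume.prod volume).prod μ) := by
    refine (integrable_prod_iff' hGmeas.aestronglyMeasurable).2 ⟨?_, ?_⟩
    · exact Filter.Eventually.of_forall hslice1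
    · have : (fun q : Ω × Ω => ∫ p : ℝ × ℝ, ‖G (p, q)‖ ∂(volume.prod volume))
          = fun q : Ω × Ω => |X q.1 - X q.2| * |Y q.1 - Y q.2| :=
        funext hslice1norm
      rw [this]; exact habs
  -- slice integral in the Ω² variable equals 2 * H
  have hslice2 : ∀ p : ℝ × ℝ, ∫ q : Ω × Ω, G (p, q) ∂μ = 2 * H p := by
    intro p
    set A : Ω → ℝ := fun ω => hcovG (X ω) p.1 with hAdef
    set B : Ω → ℝ := fun ω => hcovG (Y ω) p.2 with hBdef
    have hsX : MeasurableSet {ω | p.1 < X ω} := measurableSet_lt measurable_const hX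
    have hsY : MeasurableSet {ω | p.2 < Y ω} := measurableSet_lt measurable_const hY
    have hsXY : MeasurableSet {ω | p.1 < X ω ∧ p.2 < Y ω} := by
      exact MeasurableSet.inter hsX hsY
    have hAeq : A = ({ω | p.1 < X ω}).indicator (fun _ => (1:ℝ)) := by
      funext ω; simp only [hAdef, hcovG, indicator, mem_setOf_eq]
    have hBeq : B = ({ω | p.2 < Y ω}).indicator (fun _ => (1:ℝ)) := by
      funext ω; simp only [hBdef, hcovG, indicator, mem_setOf_eq]
    have hABeq : (fun ω => A ω * B ω)
        = ({ω | p.1 < X ω ∧ p.2 < Y ω}).indicator (fun _ => (1:ℝ)) := by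
      funext ω
      simp only [hAdef, hBdef, hcovG, indicator, mem_setOf_eq]
      by_cases h1 : p.1 < X ω <;> by_cases h2 : p.2 < Y ω <;> simp [h1, h2]
    have hA : Integrable A P := by
      rw [hAeq]
      exact (integrable_indicator_iff hsX).2 (integrableOn_const (measure_lt_top P _).ne)
    have hB : Integrable B P := by
      rw [hBeq]
      exact (integrable_indicator_iff hsY).2 (integrableOn_const (measure_lt_top P _).ne)
    have hAB : Integrable (fun ω => A ω * B ω) P := by
      rw [hABeq]
      exact (integrable_indicator_iff hsXY).2 (integrableOn_const (measure_lt_top P _).ne)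
    have hIA : ∫ ω, A ω ∂P = (P {ω | p.1 < X ω}).toReal := by
      rw [hAeq, integral_indicator_const (1:ℝ) hsX, smul_eq_mul, mul_one]; rfl
    have hIB : ∫ ω, B ω ∂P = (P {ω | p.2 < Y ω}).toReal := by
      rw [hBeq, integral_indicator_const (1:ℝ) hsY, smul_eq_mul, mul_one]; rfl
    have hIAB : ∫ ω, A ω * B ω ∂P = (P {ω | p.1 < X ω ∧ p.2 < Y ω}).toReal := by
      rw [hABeq, integral_indicator_const (1:ℝ) hsXY, smul_eq_mul, mul_one]; rfl
    have t1 : Integrable (fun q : Ω × Ω => A q.1 * B q.1) μ := hcov_int_fst P hAB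
    have t2 : Integrable (fun q : Ω × Ω => A q.1 * B q.2) μ := hA.mul_prod hB
    have t3 : Integrable (fun q : Ω × Ω => A q.2 * B q.1) μ :=
      (hB.mul_prod hA).congr (Filter.Eventually.of_forall fun q => mul_comm _ _)
    have t4 : Integrable (fun q : Ω × Ω => A q.2 * B q.2) μ := hcov_int_snd P hAB
    have hexp : (fun q : Ω × Ω => G (p, q))
        = fun q : Ω × Ω => (A q.1 * B q.1 - A q.1 * B q.2 - A q.2 * B q.1) + A q.2 * B q.2 := by
      funext q
      simp only [hGdef, hAdef, hBdef]
      ring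
    have i12 : Integrable (fun q : Ω × Ω => A q.1 * B q.1 - A q.1 * B q.2) μ := by
      exact t1.sub t2
    have i123 : Integrable
        (fun q : Ω × Ω => A q.1 * B q.1 - A q.1 * B q.2 - A q.2 * B q.1) μ := by
      exact i12.sub t3
    rw [hexp, integral_add i123 t4, integral_sub i12 t3, integral_sub t1 t2]
    have e1 : ∫ q : Ω × Ω, A q.1 * B q.1 ∂μ = (P {ω | p.1 < X ω ∧ p.2 < Y ω}).toReal := by
      rw [hcov_integral_fst P (fun ω => A ω * B ω), hIAB]
    have e2 : ∫ q : Ω × Ω, A q.1 * B q.2 ∂μ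
        = (P {ω | p.1 < X ω}).toReal * (P {ω | p.2 < Y ω}).toReal := by
      rw [integral_prod_mul A B, hIA, hIB]
    have e3 : ∫ q : Ω × Ω, A q.2 * B q.1 ∂μ
        = (P {ω | p.1 < X ω}).toReal * (P {ω | p.2 < Y ω}).toReal := by
      have : (fun q : Ω × Ω => A q.2 * B q.1) = fun q : Ω × Ω => B q.1 * A q.2 := by
        funext q; ring
      rw [this, integral_prod_mul B A, hIA, hIB]; ring
    have e4 : ∫ q : Ω × Ω, A q.2 * B q.2 ∂μ = (P {ω | p.1 < X ω ∧ p.2 < Y ω}).toReal := by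
      rw [hcov_integral_snd P (fun ω => A ω * B ω), hIAB]
    rw [e1, e2, e3, e4, hHdef]
    ring
  -- covariance identity on the Ω² side
  have hcovline : ∫ q : Ω × Ω, (X q.1 - X q.2) * (Y q.1 - Y q.2) ∂μ
      = 2 * ((∫ ω, X ω * Y ω ∂P) - (∫ ω, X ω ∂P) * (∫ ω, Y ω ∂P)) := by
    have t1 : Integrable (fun q : Ω × Ω => X q.1 * Y q.1) μ := hcov_int_fst P hXY
    have t2 : Integrable (fun q : Ω × Ω => X q.1 * Y q.2) μ := hX1.mul_prod hY1
    have t3 : Integrable (fun q : Ω × Ω => X q.2 * Y q.1) μ :=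
      (hY1.mul_prod hX1).congr (Filter.Eventually.of_forall fun q => mul_comm _ _)
    have t4 : Integrable (fun q : Ω × Ω => X q.2 * Y q.2) μ := hcov_int_snd P hXY
    have hexp : (fun q : Ω × Ω => (X q.1 - X q.2) * (Y q.1 - Y q.2))
        = fun q : Ω × Ω => (X q.1 * Y q.1 - X q.1 * Y q.2 - X q.2 * Y q.1) + X q.2 * Y q.2 := by
      funext q; ring
    have i12 : Integrable (fun q : Ω × Ω => X q.1 * Y q.1 - X q.1 * Y q.2) μ := by
      exact t1.sub t2
    have i123 : Integrable
        (fun q : Ω × Ω => X q.1 * Y q.1 - X q.1 * Y q.2 - X q.2 * Y q.1) μ := by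
      exact i12.sub t3
    rw [hexp, integral_add i123 t4, integral_sub i12 t3, integral_sub t1 t2]
    have e1 := hcov_integral_fst P (fun ω => X ω * Y ω)
    have e4 := hcov_integral_snd P (fun ω => X ω * Y ω)
    have e2 : ∫ q : Ω × Ω, X q.1 * Y q.2 ∂μ = (∫ ω, X ω ∂P) * ∫ ω, Y ω ∂P :=
      integral_prod_mul X Y
    have e3 : ∫ q : Ω × Ω, X q.2 * Y q.1 ∂μ = (∫ ω, X ω ∂P) * ∫ ω, Y ω ∂P := by
      have : (fun q : Ω × Ω => X q.2 * Y q.1) = fun q : Ω × Ω => Y q.1 * X q.2 := by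
        funext q; ring
      rw [this, integral_prod_mul Y X]; ring
    rw [e1, e2, e3, e4]
    ring
  -- Fubini
  have hswap : ∫ p : ℝ × ℝ, (∫ q : Ω × Ω, G (p, q) ∂μ) ∂(volume.prod volume)
      = ∫ q : Ω × Ω, (∫ p : ℝ × ℝ, G (p, q) ∂(volume.prod volume)) ∂μ :=
    integral_integral_swap hGint
  have hHint2 : Integrable (fun p : ℝ × ℝ => ∫ q : Ω × Ω, G (p, q) ∂μ) (volume.prod volume) :=
    hGint.integral_prod_left
  have h2H : (fun p : ℝ × ℝ => ∫ q : Ω × Ω, G (p, q) ∂μ) = fun p => 2 * H p :=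
    funext hslice2
  have hHint : Integrable H (volume.prod volume) := by
    rw [h2H] at hHint2
    exact (hHint2.const_mul (1/2)).congr (Filter.Eventually.of_forall fun p => by ring)
  have key : ∫ p : ℝ × ℝ, 2 * H p ∂(volume.prod volume)
      = 2 * ((∫ ω, X ω * Y ω ∂P) - (∫ ω, X ω ∂P) * (∫ ω, Y ω ∂P)) := by
    rw [← h2H, hswap]
    have : (fun q : Ω × Ω => ∫ p : ℝ × ℝ, G (p, q) ∂(volume.prod volume))
        = fun q : Ω × Ω => (X q.1 - X q.2) * (Y q.1 - Y q.2) := funext hslice1int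
    rw [this, hcovline]
  rw [integral_const_mul] at key
  have hvol : (volume : Measure (ℝ × ℝ)) = volume.prod volume := Measure.volume_eq_prod ℝ ℝ
  constructor
  · rw [hvol]; exact hHint
  · have : ∫ p : ℝ × ℝ, H p ∂(volume : Measure (ℝ × ℝ))
        = ∫ p : ℝ × ℝ, H p ∂(volume.prod volume) := by rw [hvol]
    rw [hHdef] at this
    rw [this]
    linarith [key]

end
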